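/- In the isotropic multivariate Gaussian setting, the minimax problem min over unit w and t ∈ ℝ of max{R₀(w,t), R₁(w,t)} equals min over t ∈ ℝ of max{R₀(μ/‖μ‖, t), R₁(μ/‖μ‖, t)}; i.e., the worst-class optimal hyperplane has normal direction μ/‖μ‖₂. -/

import Mathlib

open ProbabilityTheory Set

/-- The standard normal cumulative distribution function Φ. -/
noncomputable def stdNormalCDF : ℝ → ℝ :=
  fun x => ProbabilityTheory.cdf (gaussianReal 0 1) x

lemma stdNormalCDF_mono : Monotone stdNormalCDF := monotone_cdf _

lemma stdNormalCDF_nonneg (x : ℝ) : 0 ≤ stdNormalCDF x := cdf_nonneg _ _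

/-- In the isotropic multivariate Gaussian setting with class risks
`R₁(w,t) = Φ((t − wᵀμ)/σ₁)` and `R₀(w,t) = Φ((−t − wᵀμ)/σ₀)` over unit vectors `w`,
the minimax value `inf over unit w and t of max{R₀(w,t), R₁(w,t)}` equals
`inf over t of max{R₀(μ/‖μ‖,t), R₁(μ/‖μ‖,t)}`: the worst-class optimal hyperplane has
normal direction `μ/‖μ‖`. -/
theorem stmt_13 (d : ℕ) (μ : EuclideanSpace ℝ (Fin d)) (hμ : μ ≠ 0)
    (σ₀ σ₁ : ℝ) (hσ₀ : 0 < σ₀) (hσ₁ : 0 < σ₁) :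
    sInf {z : ℝ | ∃ (w : EuclideanSpace ℝ (Fin d)) (t : ℝ), ‖w‖ = 1 ∧
        z = max (stdNormalCDF ((-t - (inner ℝ w μ : ℝ)) / σ₀))
                (stdNormalCDF ((t - (inner ℝ w μ : ℝ)) / σ₁))}
    = sInf {z : ℝ | ∃ t : ℝ,
        z = max (stdNormalCDF ((-t - (inner ℝ ((‖μ‖⁻¹ : ℝ) • μ) μ : ℝ)) / σ₀))
                (stdNormalCDF ((t - (inner ℝ ((‖μ‖⁻¹ : ℝ) • μ) μ : ℝ)) / σ₁))} := by
  have hμn : (0:ℝ) < ‖μ‖ := norm_pos_iff.mpr hμ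
  have hwnorm : ‖(‖μ‖⁻¹ : ℝ) • μ‖ = 1 := by
    rw [norm_smul, norm_inv, norm_norm, inv_mul_cancel₀ hμn.ne']
  have hinner : (inner ℝ ((‖μ‖⁻¹ : ℝ) • μ) μ : ℝ) = ‖μ‖ := by
    rw [real_inner_smul_left, real_inner_self_eq_norm_sq]
    field_simp
  set S := {z : ℝ | ∃ (w : EuclideanSpace ℝ (Fin d)) (t : ℝ), ‖w‖ = 1 ∧
        z = max (stdNormalCDF ((-t - (inner ℝ w μ : ℝ)) / σ₀))
                (stdNormalCDF ((t - (inner ℝ w μ : ℝ)) / σ₁))} with hS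
  set T := {z : ℝ | ∃ t : ℝ,
        z = max (stdNormalCDF ((-t - (inner ℝ ((‖μ‖⁻¹ : ℝ) • μ) μ : ℝ)) / σ₀))
                (stdNormalCDF ((t - (inner ℝ ((‖μ‖⁻¹ : ℝ) • μ) μ : ℝ)) / σ₁))} with hT
  have hTS : T ⊆ S := by
    rintro z ⟨t, rfl⟩
    exact ⟨_, t, hwnorm, rfl⟩
  have hSbdd : BddBelow S := by
    refine ⟨0, ?_⟩
    rintro z ⟨w, t, hw, rfl⟩
    exact le_max_of_le_left (stdNormalCDF_nonneg _)
  have hTbdd : BddBelow T := hSbdd.mono hTS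
  have hTne : T.Nonempty := ⟨_, 0, rfl⟩
  apply le_antisymm
  · exact csInf_le_csInf hSbdd hTne hTS
  · apply le_csInf (hTne.mono hTS)
    rintro z ⟨w, t, hw, rfl⟩
    have hcs : (inner ℝ w μ : ℝ) ≤ ‖μ‖ := by
      calc (inner ℝ w μ : ℝ) ≤ ‖w‖ * ‖μ‖ := real_inner_le_norm w μ
        _ = ‖μ‖ := by rw [hw, one_mul]
    refine csInf_le_of_le hTbdd ⟨t, rfl⟩ ?_
    rw [hinner]
    apply max_le_max
    · exact stdNormalCDF_mono (by gcongr)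
    · exact stdNormalCDF_mono (by gcongr)
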